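/- arXiv:1209.4537 — 2 statements merged into one kernel-verified Lean document; each statement's English description precedes it below -/
import Mathlib

section
/- The linearized operator L_q u = (1/2)u'' − (u·(J*q) + q·(J*u))', acting on C² functions u on S with ∫_S u = 0, is symmetric with respect to the inner product (u,v)_{−1,1/q} = ∫_S (1/q)·U·V, where U, V are the primitives of u, v normalized so that ∫_S U/q = ∫_S V/q = 0. -/
open Real MeasureTheory

/-- Modified Bessel function of the first kind of order `j` (integral formula). -/
noncomputable def besselI (j : ℕ) (x : ℝ) : ℝ :=
  (1 / (2 * π)) * ∫ θ in (0:ℝ)..(2 * π), (Real.cos θ) ^ j * Real.exp (x * Real.cos θ)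

/-- The stationary density `q(θ) = exp(2Kr cos θ)/(2π I₀(2Kr))`. -/
noncomputable def q (K r θ : ℝ) : ℝ :=
  Real.exp (2 * K * r * Real.cos θ) / (2 * π * besselI 0 (2 * K * r))

/-- Convolution with `J(θ) = -K sin θ` on the circle. -/
noncomputable def Jconv (K : ℝ) (p : ℝ → ℝ) (θ : ℝ) : ℝ :=
  ∫ θ' in (0:ℝ)..(2 * π), (-K * Real.sin (θ - θ')) * p θ'

lemma sin_exp_integral (x : ℝ) (hx : x ≠ 0) :
    (∫ θ in (0:ℝ)..(2 * π), Real.sin θ * Real.exp (x * Real.cos θ)) = 0 := by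
  have h : ∀ θ ∈ Set.uIcc (0:ℝ) (2 * π),
      HasDerivAt (fun θ => -Real.exp (x * Real.cos θ) / x)
        (Real.sin θ * Real.exp (x * Real.cos θ)) θ := by
    intro θ _
    have h1 : HasDerivAt (fun θ : ℝ => x * Real.cos θ) (x * (-Real.sin θ)) θ :=
      (Real.hasDerivAt_cos θ).const_mul x
    have h2 := (h1.exp.neg).div_const x
    refine h2.congr_deriv ?_
    rw [div_eq_iff hx]
    ring
  rw [intervalIntegral.integral_eq_sub_of_hasDerivAt h
    (Continuous.intervalIntegrable (by continuity) _ _)]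
  simp [Real.cos_two_pi]

lemma besselI_zero_pos (x : ℝ) : 0 < besselI 0 x := by
  unfold besselI
  have hπ := Real.pi_pos
  apply mul_pos (by positivity)
  apply intervalIntegral.intervalIntegral_pos_of_pos
    (Continuous.intervalIntegrable (by continuity) _ _)
  · intro t; positivity
  · positivity

lemma q_pos (K r θ : ℝ) : 0 < q K r θ := by
  unfold q
  have := besselI_zero_pos (2 * K * r)
  have hπ := Real.pi_pos
  positivity

lemma q_continuous (K r : ℝ) : Continuous (q K r) := by
  unfold q
  exact (Real.continuous_exp.comp (continuous_const.mul Real.continuous_cos)).div_const _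

lemma hasDerivAt_q (K r θ : ℝ) :
    HasDerivAt (q K r) (-(2 * K * r) * Real.sin θ * q K r θ) θ := by
  have h1 : HasDerivAt (fun θ : ℝ => 2 * K * r * Real.cos θ) (2 * K * r * (-Real.sin θ)) θ :=
    (Real.hasDerivAt_cos θ).const_mul (2 * K * r)
  have h2 := h1.exp.div_const (2 * π * besselI 0 (2 * K * r))
  refine h2.congr_deriv ?_
  unfold q
  ring

lemma Jconv_eq (K : ℝ) (p : ℝ → ℝ) (hp : Continuous p) (θ : ℝ) :
    Jconv K p θ = -K * Real.sin θ * (∫ t in (0:ℝ)..(2 * π), Real.cos t * p t)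
      + K * Real.cos θ * (∫ t in (0:ℝ)..(2 * π), Real.sin t * p t) := by
  unfold Jconv
  have h : ∀ t : ℝ, (-K * Real.sin (θ - t)) * p t
      = (-K * Real.sin θ) * (Real.cos t * p t) + (K * Real.cos θ) * (Real.sin t * p t) := by
    intro t; rw [Real.sin_sub]; ring
  simp only [h]
  rw [intervalIntegral.integral_add
      (Continuous.intervalIntegrable (by fun_prop) _ _)
      (Continuous.intervalIntegrable (by fun_prop) _ _),
    intervalIntegral.integral_const_mul, intervalIntegral.integral_const_mul]

/-- Symmetry of the linearized operator `L_q u = (1/2)u'' − (u (J*q) + q (J*u))'` in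
the weighted space `H_{−1,1/q}`: with `U, V` the primitives of `u, v` normalized by
`∫ U/q = ∫ V/q = 0`, one has `(L_q u, v)_{−1,1/q} = (u, L_q v)_{−1,1/q}`.  Since
`(1/2)u' − u (J*q) − q (J*u)` is a primitive of `L_q u` and `∫ V/q = 0`, this reads
as the stated integral identity. -/
theorem Lq_symmetric (K r : ℝ) (hK : 1 < K) (hr : 0 < r)
    (hfix : r = besselI 1 (2 * K * r) / besselI 0 (2 * K * r))
    (u v U V : ℝ → ℝ)
    (hu : ContDiff ℝ 2 u) (hv : ContDiff ℝ 2 v)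
    (huper : Function.Periodic u (2 * π)) (hvper : Function.Periodic v (2 * π))
    (hu0 : (∫ θ in (0:ℝ)..(2 * π), u θ) = 0)
    (hv0 : (∫ θ in (0:ℝ)..(2 * π), v θ) = 0)
    (hU : ∀ θ, HasDerivAt U (u θ) θ)
    (hV : ∀ θ, HasDerivAt V (v θ) θ)
    (hUc : (∫ θ in (0:ℝ)..(2 * π), U θ / q K r θ) = 0)
    (hVc : (∫ θ in (0:ℝ)..(2 * π), V θ / q K r θ) = 0) :
    (∫ θ in (0:ℝ)..(2 * π),
        ((1 / 2) * deriv u θ - u θ * Jconv K (q K r) θ - q K r θ * Jconv K u θ)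
          * V θ / q K r θ)
      = ∫ θ in (0:ℝ)..(2 * π),
        ((1 / 2) * deriv v θ - v θ * Jconv K (q K r) θ - q K r θ * Jconv K v θ)
          * U θ / q K r θ := by
  have hπ : (0:ℝ) < π := Real.pi_pos
  have hc0 : (2 * K * r) ≠ 0 := by positivity
  have hI0 : 0 < besselI 0 (2 * K * r) := besselI_zero_pos _
  have hq0 : ∀ θ, 0 < q K r θ := q_pos K r
  have hqne : ∀ θ, q K r θ ≠ 0 := fun θ => (hq0 θ).ne'
  have hqc : Continuous (q K r) := q_continuous K r
  have hucont : Continuous u := hu.continuous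
  have hvcont : Continuous v := hv.continuous
  have hUcont : Continuous U := (Differentiable.continuous fun θ => (hU θ).differentiableAt)
  have hVcont : Continuous V := (Differentiable.continuous fun θ => (hV θ).differentiableAt)
  have hdu : Continuous (deriv u) := hu.continuous_deriv one_le_two
  have hdv : Continuous (deriv v) := hv.continuous_deriv one_le_two
  have hu' : ∀ θ, HasDerivAt u (deriv u θ) θ := fun θ =>
    ((hu.differentiable (by simp)) θ).hasDerivAt
  have hv' : ∀ θ, HasDerivAt v (deriv v θ) θ := fun θ =>
    ((hv.differentiable (by simp)) θ).hasDerivAt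
  set au := ∫ t in (0:ℝ)..(2 * π), Real.cos t * u t with hau
  set bu := ∫ t in (0:ℝ)..(2 * π), Real.sin t * u t with hbu
  set av := ∫ t in (0:ℝ)..(2 * π), Real.cos t * v t with hav
  set bv := ∫ t in (0:ℝ)..(2 * π), Real.sin t * v t with hbv
  -- formulas for the convolutions
  have hJu : ∀ θ, Jconv K u θ = -K * Real.sin θ * au + K * Real.cos θ * bu := by
    intro θ; rw [hau, hbu]; exact Jconv_eq K u hucont θ
  have hJv : ∀ θ, Jconv K v θ = -K * Real.sin θ * av + K * Real.cos θ * bv := by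
    intro θ; rw [hav, hbv]; exact Jconv_eq K v hvcont θ
  have hcosq : (∫ t in (0:ℝ)..(2 * π), Real.cos t * q K r t) = r := by
    unfold q
    rw [show (fun t => Real.cos t * (Real.exp (2 * K * r * Real.cos t)
        / (2 * π * besselI 0 (2 * K * r))))
        = fun t => (Real.cos t * Real.exp (2 * K * r * Real.cos t))
          / (2 * π * besselI 0 (2 * K * r)) by funext t; ring]
    rw [intervalIntegral.integral_div]
    have : (∫ t in (0:ℝ)..(2 * π), Real.cos t * Real.exp (2 * K * r * Real.cos t))
        = 2 * π * besselI 1 (2 * K * r) := by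
      unfold besselI
      rw [show (fun θ => (Real.cos θ) ^ 1 * Real.exp (2 * K * r * Real.cos θ))
          = fun θ => Real.cos θ * Real.exp (2 * K * r * Real.cos θ) by funext t; rw [pow_one]]
      field_simp
      congr 1; funext t; ring_nf
    have hfix' : r * besselI 0 (2 * K * r) = besselI 1 (2 * K * r) := by
      have h' := hfix
      rw [eq_div_iff hI0.ne'] at h'
      exact h'
    rw [this, div_eq_iff (mul_pos (by positivity) hI0).ne', ← hfix']
    ring
  have hsinq : (∫ t in (0:ℝ)..(2 * π), Real.sin t * q K r t) = 0 := by
    unfold q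
    rw [show (fun t => Real.sin t * (Real.exp (2 * K * r * Real.cos t)
        / (2 * π * besselI 0 (2 * K * r))))
        = fun t => (Real.sin t * Real.exp (2 * K * r * Real.cos t))
          / (2 * π * besselI 0 (2 * K * r)) by funext t; ring]
    rw [intervalIntegral.integral_div, sin_exp_integral _ hc0, zero_div]
  have hJq : ∀ θ, Jconv K (q K r) θ = -(K * r) * Real.sin θ := by
    intro θ
    rw [Jconv_eq K (q K r) hqc θ, hcosq, hsinq]
    ring
  -- boundary values
  have hu2 : u (2 * π) = u 0 := by have := huper 0; simpa using this
  have hv2 : v (2 * π) = v 0 := by have := hvper 0; simpa using this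
  have hU2 : U (2 * π) = U 0 := by
    have h := intervalIntegral.integral_eq_sub_of_hasDerivAt
      (a := (0:ℝ)) (b := 2 * π) (f := U) (f' := u) (fun x _ => hU x) (hucont.intervalIntegrable _ _)
    rw [hu0] at h; linarith
  have hV2 : V (2 * π) = V 0 := by
    have h := intervalIntegral.integral_eq_sub_of_hasDerivAt
      (a := (0:ℝ)) (b := 2 * π) (f := V) (f' := v) (fun x _ => hV x) (hvcont.intervalIntegrable _ _)
    rw [hv0] at h; linarith
  have hq2 : q K r (2 * π) = q K r 0 := by unfold q; rw [Real.cos_two_pi, Real.cos_zero]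
  -- integration by parts identities
  have hsinV : (∫ t in (0:ℝ)..(2 * π), Real.sin t * V t) = av := by
    have key : ∀ t ∈ Set.uIcc (0:ℝ) (2 * π),
        HasDerivAt (fun t => -(Real.cos t * V t)) (Real.sin t * V t - Real.cos t * v t) t := by
      intro t _
      have := ((Real.hasDerivAt_cos t).mul (hV t)).neg
      refine this.congr_deriv ?_; ring
    have h := intervalIntegral.integral_eq_sub_of_hasDerivAt key
      (Continuous.intervalIntegrable (by fun_prop) _ _)
    rw [intervalIntegral.integral_sub
        (Continuous.intervalIntegrable (by fun_prop) _ _)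
        (Continuous.intervalIntegrable (by fun_prop) _ _)] at h
    simp only [Real.cos_two_pi, Real.cos_zero, hV2, one_mul] at h
    rw [hav]; linarith
  have hcosV : (∫ t in (0:ℝ)..(2 * π), Real.cos t * V t) = -bv := by
    have key : ∀ t ∈ Set.uIcc (0:ℝ) (2 * π),
        HasDerivAt (fun t => Real.sin t * V t) (Real.cos t * V t + Real.sin t * v t) t := by
      intro t _; exact (Real.hasDerivAt_sin t).mul (hV t)
    have h := intervalIntegral.integral_eq_sub_of_hasDerivAt key
      (Continuous.intervalIntegrable (by fun_prop) _ _)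
    rw [intervalIntegral.integral_add
        (Continuous.intervalIntegrable (by fun_prop) _ _)
        (Continuous.intervalIntegrable (by fun_prop) _ _)] at h
    simp only [Real.sin_two_pi, Real.sin_zero, zero_mul, sub_zero] at h
    rw [hbv]; linarith
  have hsinU : (∫ t in (0:ℝ)..(2 * π), Real.sin t * U t) = au := by
    have key : ∀ t ∈ Set.uIcc (0:ℝ) (2 * π),
        HasDerivAt (fun t => -(Real.cos t * U t)) (Real.sin t * U t - Real.cos t * u t) t := by
      intro t _
      have := ((Real.hasDerivAt_cos t).mul (hU t)).neg
      refine this.congr_deriv ?_; ring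
    have h := intervalIntegral.integral_eq_sub_of_hasDerivAt key
      (Continuous.intervalIntegrable (by fun_prop) _ _)
    rw [intervalIntegral.integral_sub
        (Continuous.intervalIntegrable (by fun_prop) _ _)
        (Continuous.intervalIntegrable (by fun_prop) _ _)] at h
    simp only [Real.cos_two_pi, Real.cos_zero, hU2, one_mul] at h
    rw [hau]; linarith
  have hcosU : (∫ t in (0:ℝ)..(2 * π), Real.cos t * U t) = -bu := by
    have key : ∀ t ∈ Set.uIcc (0:ℝ) (2 * π),
        HasDerivAt (fun t => Real.sin t * U t) (Real.cos t * U t + Real.sin t * u t) t := by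
      intro t _; exact (Real.hasDerivAt_sin t).mul (hU t)
    have h := intervalIntegral.integral_eq_sub_of_hasDerivAt key
      (Continuous.intervalIntegrable (by fun_prop) _ _)
    rw [intervalIntegral.integral_add
        (Continuous.intervalIntegrable (by fun_prop) _ _)
        (Continuous.intervalIntegrable (by fun_prop) _ _)] at h
    simp only [Real.sin_two_pi, Real.sin_zero, zero_mul, sub_zero] at h
    rw [hbu]; linarith
  -- the integrands after substituting the convolution formulas
  set L : ℝ → ℝ := fun θ =>
    ((1 / 2) * deriv u θ - u θ * (-(K * r) * Real.sin θ)
      - q K r θ * (-K * Real.sin θ * au + K * Real.cos θ * bu)) * V θ / q K r θ with hL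
  set R : ℝ → ℝ := fun θ =>
    ((1 / 2) * deriv v θ - v θ * (-(K * r) * Real.sin θ)
      - q K r θ * (-K * Real.sin θ * av + K * Real.cos θ * bv)) * U θ / q K r θ with hR
  set P : ℝ → ℝ := fun θ => (-K * Real.sin θ * au + K * Real.cos θ * bu) * V θ with hP
  set Q : ℝ → ℝ := fun θ => (-K * Real.sin θ * av + K * Real.cos θ * bv) * U θ with hQ
  have hLc : Continuous L := by
    rw [hL]
    apply Continuous.div _ hqc hqne
    fun_prop
  have hRc : Continuous R := by
    rw [hR]
    apply Continuous.div _ hqc hqne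
    fun_prop
  have hPc : Continuous P := by rw [hP]; fun_prop
  have hQc : Continuous Q := by rw [hQ]; fun_prop
  -- derivative of the combined primitive
  have hG : ∀ θ ∈ Set.uIcc (0:ℝ) (2 * π),
      HasDerivAt (fun θ => (1 / 2 : ℝ) * ((u θ * V θ - v θ * U θ) / q K r θ))
        (L θ - R θ + P θ - Q θ) θ := by
    intro θ _
    have h1 := ((((hu' θ).mul (hV θ)).sub ((hv' θ).mul (hU θ))).div
      (hasDerivAt_q K r θ) (hqne θ)).const_mul (1 / 2 : ℝ)
    refine h1.congr_deriv ?_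
    rw [hL, hR, hP, hQ]
    field_simp [hqne θ]
    simp only [Pi.sub_apply, Pi.mul_apply]
    ring
  have hW := intervalIntegral.integral_eq_sub_of_hasDerivAt hG
    (Continuous.intervalIntegrable (((hLc.sub hRc).add hPc).sub hQc) _ _)
  have hW0 : (∫ θ in (0:ℝ)..(2 * π), (L θ - R θ + P θ - Q θ)) = 0 := by
    rw [hW]
    simp only [hu2, hv2, hU2, hV2, hq2, sub_self]
  erw [intervalIntegral.integral_sub (((hLc.sub hRc).add hPc).intervalIntegrable _ _)
      (hQc.intervalIntegrable _ _),
    intervalIntegral.integral_add ((hLc.sub hRc).intervalIntegrable _ _)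
      (hPc.intervalIntegrable _ _),
    intervalIntegral.integral_sub (hLc.intervalIntegrable _ _)
      (hRc.intervalIntegrable _ _)] at hW0
  -- compute ∫ P and ∫ Q
  have hPint : (∫ θ in (0:ℝ)..(2 * π), P θ) = -K * au * av + K * bu * (-bv) := by
    rw [hP]
    have h : ∀ θ : ℝ, (-K * Real.sin θ * au + K * Real.cos θ * bu) * V θ
        = (-K * au) * (Real.sin θ * V θ) + (K * bu) * (Real.cos θ * V θ) := by
      intro θ; ring
    simp only [h]
    rw [intervalIntegral.integral_add
        (Continuous.intervalIntegrable (by fun_prop) _ _)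
        (Continuous.intervalIntegrable (by fun_prop) _ _),
      intervalIntegral.integral_const_mul, intervalIntegral.integral_const_mul, hsinV, hcosV]
  have hQint : (∫ θ in (0:ℝ)..(2 * π), Q θ) = -K * av * au + K * bv * (-bu) := by
    rw [hQ]
    have h : ∀ θ : ℝ, (-K * Real.sin θ * av + K * Real.cos θ * bv) * U θ
        = (-K * av) * (Real.sin θ * U θ) + (K * bv) * (Real.cos θ * U θ) := by
      intro θ; ring
    simp only [h]
    rw [intervalIntegral.integral_add
        (Continuous.intervalIntegrable (by fun_prop) _ _)
        (Continuous.intervalIntegrable (by fun_prop) _ _),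
      intervalIntegral.integral_const_mul, intervalIntegral.integral_const_mul, hsinU, hcosU]
  -- conclude
  simp only [hJq, hJu, hJv]
  rw [← hL, ← hR]
  rw [hPint, hQint] at hW0
  linarith
end

section
/- With q(θ) = exp(2Kr cos θ)/(2π I₀(2Kr)), the weighted H_{−1} norm of q' satisfies ‖q'‖²_{−1,1/q} = 1 − (2π)²/∫_S (1/q) = 1 − 1/I₀(2Kr)². Consequently D_K := 1/‖q'‖_{−1,1/q} = (1 − I₀(2Kr)^{−2})^{−1/2}. -/
open Real MeasureTheory

lemma cont_exp_cos (a : ℝ) : Continuous fun θ : ℝ => Real.exp (a * Real.cos θ) :=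
  Real.continuous_exp.comp (continuous_const.mul Real.continuous_cos)

lemma int_exp (a : ℝ) :
    (∫ θ in (0:ℝ)..(2 * π), Real.exp (a * Real.cos θ)) = 2 * π * besselI 0 a := by
  have hπ : (0:ℝ) < π := Real.pi_pos
  simp only [besselI, pow_zero, one_mul]
  field_simp

lemma int_exp_neg (a : ℝ) :
    (∫ θ in (0:ℝ)..(2 * π), Real.exp (-(a * Real.cos θ))) = 2 * π * besselI 0 a := by
  have hp : Function.Periodic (fun θ : ℝ => Real.exp (a * Real.cos θ)) (2 * π) := by
    intro θ; simp [Real.cos_add_two_pi]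
  have h1 : ∀ θ : ℝ, Real.exp (-(a * Real.cos θ)) = Real.exp (a * Real.cos (θ + π)) := by
    intro θ; rw [Real.cos_add_pi]; ring_nf
  calc (∫ θ in (0:ℝ)..(2 * π), Real.exp (-(a * Real.cos θ)))
      = ∫ θ in (0:ℝ)..(2 * π), Real.exp (a * Real.cos (θ + π)) := by simp_rw [h1]
    _ = ∫ θ in (0 + π : ℝ)..(2 * π + π), Real.exp (a * Real.cos θ) :=
        intervalIntegral.integral_comp_add_right (fun θ => Real.exp (a * Real.cos θ)) π
    _ = ∫ θ in (π : ℝ)..(π + 2 * π), Real.exp (a * Real.cos θ) := by ring_nf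
    _ = ∫ θ in (0 : ℝ)..(0 + 2 * π), Real.exp (a * Real.cos θ) := hp.intervalIntegral_add_eq π 0
    _ = ∫ θ in (0 : ℝ)..(2 * π), Real.exp (a * Real.cos θ) := by ring_nf
    _ = 2 * π * besselI 0 a := int_exp a

lemma besselI0_pos (a : ℝ) : 0 < besselI 0 a := by
  have hπ : (0:ℝ) < π := Real.pi_pos
  have hint : 0 < ∫ θ in (0:ℝ)..(2 * π), Real.exp (a * Real.cos θ) :=
    intervalIntegral.intervalIntegral_pos_of_pos
      ((cont_exp_cos a).intervalIntegrable _ _) (fun x => Real.exp_pos _) (by linarith)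
  simp only [besselI, pow_zero, one_mul]
  positivity

/-- The weighted `H_{−1,1/q}` norm of `q'`: the centered primitive of `q'` is
`q − c` with `c = 2π/∫(1/q) = 1/(2π I₀(2Kr)²)`, and
`‖q'‖²_{−1,1/q} = ∫ (q − c)²/q = 1 − (2π)²/∫(1/q) = 1 − I₀(2Kr)^{−2}`.
Consequently `D_K = 1/‖q'‖_{−1,1/q} = (1 − I₀(2Kr)^{−2})^{−1/2}`. -/
theorem norm_q_deriv_and_DK (K r : ℝ) (hK : 1 < K) (hr : 0 < r)
    (hfix : r = besselI 1 (2 * K * r) / besselI 0 (2 * K * r)) :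
    let c : ℝ := 1 / (2 * π * (besselI 0 (2 * K * r)) ^ 2)
    (c = 2 * π / ∫ θ in (0:ℝ)..(2 * π), 1 / q K r θ) ∧
    (∫ θ in (0:ℝ)..(2 * π), (q K r θ - c) / q K r θ) = 0 ∧
    (∀ θ, HasDerivAt (fun θ' => q K r θ' - c) (deriv (q K r) θ) θ) ∧
    (∫ θ in (0:ℝ)..(2 * π), (q K r θ - c) ^ 2 / q K r θ)
      = 1 - (2 * π) ^ 2 / ∫ θ in (0:ℝ)..(2 * π), 1 / q K r θ ∧
    (∫ θ in (0:ℝ)..(2 * π), (q K r θ - c) ^ 2 / q K r θ)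
      = 1 - 1 / (besselI 0 (2 * K * r)) ^ 2 ∧
    1 / Real.sqrt (∫ θ in (0:ℝ)..(2 * π), (q K r θ - c) ^ 2 / q K r θ)
      = 1 / Real.sqrt (1 - 1 / (besselI 0 (2 * K * r)) ^ 2) := by
  intro c
  have hπ : (0:ℝ) < π := Real.pi_pos
  set A := besselI 0 (2 * K * r) with hA
  have hA0 : 0 < A := besselI0_pos _
  have hq : ∀ θ, q K r θ = Real.exp (2 * K * r * Real.cos θ) / (2 * π * A) := fun θ => rfl
  have hqpos : ∀ θ, 0 < q K r θ := fun θ => div_pos (Real.exp_pos _) (by positivity)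
  have hinv : ∀ θ, 1 / q K r θ = 2 * π * A * Real.exp (-(2 * K * r * Real.cos θ)) := by
    intro θ
    rw [hq θ, Real.exp_neg]
    field_simp
  have hint_inv : (∫ θ in (0:ℝ)..(2 * π), 1 / q K r θ) = (2 * π * A) ^ 2 := by
    simp_rw [hinv]
    rw [intervalIntegral.integral_const_mul, int_exp_neg]
    ring
  have hint_q : (∫ θ in (0:ℝ)..(2 * π), q K r θ) = 1 := by
    simp_rw [hq]
    rw [intervalIntegral.integral_div, int_exp]
    field_simp
    exact hA.symm
  have hcval : c = 1 / (2 * π * A ^ 2) := rfl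
  have hintg1 : IntervalIntegrable (fun θ : ℝ => c * (2 * π * A * Real.exp (-(2 * K * r * Real.cos θ)))) volume 0 (2 * π) := by
    apply Continuous.intervalIntegrable
    have : Continuous fun θ : ℝ => Real.exp (-(2 * K * r) * Real.cos θ) := cont_exp_cos _
    simp only [neg_mul] at this
    fun_prop
  have hintg2 : IntervalIntegrable (fun θ : ℝ => c ^ 2 * (2 * π * A * Real.exp (-(2 * K * r * Real.cos θ)))) volume 0 (2 * π) := by
    apply Continuous.intervalIntegrable
    have : Continuous fun θ : ℝ => Real.exp (-(2 * K * r) * Real.cos θ) := cont_exp_cos _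
    simp only [neg_mul] at this
    fun_prop
  have hintgq : IntervalIntegrable (fun θ : ℝ => q K r θ) volume 0 (2 * π) := by
    apply Continuous.intervalIntegrable
    simp only [hq]
    exact (cont_exp_cos _).div_const _
  have hmain : (∫ θ in (0:ℝ)..(2 * π), (q K r θ - c) ^ 2 / q K r θ) = 1 - 1 / A ^ 2 := by
    have heq4 : ∀ θ, (q K r θ - c) ^ 2 / q K r θ
        = (q K r θ - 2 * c) + c ^ 2 * (2 * π * A * Real.exp (-(2 * K * r * Real.cos θ))) := by
      intro θ
      rw [← hinv θ]
      have h := (hqpos θ).ne'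
      field_simp
      ring
    simp_rw [heq4]
    rw [intervalIntegral.integral_add (hintgq.sub (intervalIntegrable_const)) hintg2,
      intervalIntegral.integral_sub hintgq intervalIntegrable_const]
    simp only [intervalIntegral.integral_const_mul, intervalIntegral.integral_const,
      int_exp_neg, hint_q, smul_eq_mul, sub_zero]
    rw [hcval]
    have hA' : A ≠ 0 := hA0.ne'
    have hπ' : π ≠ 0 := hπ.ne'
    field_simp
    ring
  refine ⟨?_, ?_, ?_, ?_, hmain, by rw [hmain]⟩
  · rw [hint_inv, hcval]
    field_simp
  · have heq2 : ∀ θ, (q K r θ - c) / q K r θ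
        = 1 - c * (2 * π * A * Real.exp (-(2 * K * r * Real.cos θ))) := by
      intro θ
      rw [← hinv θ]
      have h := (hqpos θ).ne'
      field_simp
    simp_rw [heq2]
    rw [intervalIntegral.integral_sub intervalIntegrable_const hintg1]
    simp only [intervalIntegral.integral_const_mul, intervalIntegral.integral_const,
      int_exp_neg, smul_eq_mul, sub_zero]
    rw [hcval]
    have hA' : A ≠ 0 := hA0.ne'
    have hπ' : π ≠ 0 := hπ.ne'
    field_simp
    ring
  · intro θ
    have hd : DifferentiableAt ℝ (q K r) θ := by
      have : q K r = fun θ' => Real.exp (2 * K * r * Real.cos θ') / (2 * π * A) := rfl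
      rw [this]
      fun_prop
    exact hd.hasDerivAt.sub_const c
  · rw [hmain, hint_inv]
    have hA' : A ≠ 0 := hA0.ne'
    have hπ' : π ≠ 0 := hπ.ne'
    field_simp
end
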